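/- Let C = ((F1(x)|0),(l(x)|F2(x))) be a double cyclic code of length (r,s) over Z4 and let its dual double cyclic code be C⊥ = ((F̂1(x)|0),(l̂(x)|F̂2(x))). Then F̂1*(x)·gcd(F1(x),l(x)) is a multiple of x^r−1 in Z4[x], i.e., F̂1*(x)·gcd(F1(x),l(x)) = λ(x)(x^r−1) for some λ ∈ Z4[x]. -/

import Mathlib

open Polynomial

abbrev Z4 := ZMod 4

abbrev Rq (n : ℕ) := Polynomial Z4 ⧸ Ideal.span ({(X : Polynomial Z4) ^ n - 1} : Set (Polynomial Z4))

noncomputable def mkQ (n : ℕ) (p : Polynomial Z4) : Rq n := Ideal.Quotient.mk _ p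

noncomputable def toPoly {n : ℕ} (c : Fin n → Z4) : Polynomial Z4 :=
  ∑ i, Polynomial.C (c i) * X ^ (i : ℕ)

noncomputable def tau {r s : ℕ} (c : (Fin r → Z4) × (Fin s → Z4)) : Rq r × Rq s :=
  (mkQ r (toPoly c.1), mkQ s (toPoly c.2))

def shiftT {r s : ℕ} (c : (Fin r → Z4) × (Fin s → Z4)) : (Fin r → Z4) × (Fin s → Z4) :=
  (fun i => c.1 ((finRotate r).symm i), fun j => c.2 ((finRotate s).symm j))

def innerProd {r s : ℕ} (c c' : (Fin r → Z4) × (Fin s → Z4)) : Z4 :=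
  ∑ i, c.1 i * c'.1 i + ∑ j, c.2 j * c'.2 j

/-- The `Z4[x]`-submodule of `Z4[x]/(x^r−1) × Z4[x]/(x^s−1)` generated by
`(F1|0)` and `(l|F2)`. -/
noncomputable def polyGen2 (r s : ℕ) (F1 l F2 : Polynomial Z4) :
    Submodule (Polynomial Z4) (Rq r × Rq s) :=
  Submodule.span (Polynomial Z4) {(mkQ r F1, (0 : Rq s)), (mkQ r l, mkQ s F2)}

/-- The dual of a set of words with respect to the standard inner product. -/
def dualSet {r s : ℕ} (C : Set ((Fin r → Z4) × (Fin s → Z4))) :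
    Set ((Fin r → Z4) × (Fin s → Z4)) :=
  {c' | ∀ c ∈ C, innerProd c c' = 0}


instance : Nontrivial Z4 := ⟨0, 1, by decide⟩


namespace St12
open Finset

noncomputable abbrev MM (r : ℕ) : Polynomial Z4 := X ^ r - 1

lemma MM_monic {r : ℕ} (hr : 0 < r) : (MM r).Monic := by
  simpa using Polynomial.monic_X_pow_sub_C (1 : Z4) (by omega)

lemma MM_deg {r : ℕ} (hr : 0 < r) : (MM r).degree = r := by
  simpa using Polynomial.degree_X_pow_sub_C hr (1 : Z4)

noncomputable def vv (r : ℕ) (p : Polynomial Z4) : Fin r → Z4 := fun k => (p %ₘ MM r).coeff k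

lemma modByMonic_eq_of {r : ℕ} (hr : 0 < r) {p q : Polynomial Z4}
    (h : MM r ∣ p - q) (hq : q.degree < (r : WithBot ℕ)) : p %ₘ MM r = q := by
  obtain ⟨c, hc⟩ := h
  have hp : p = q + MM r * c := by linear_combination hc
  rw [hp, Polynomial.add_modByMonic,
    (Polynomial.modByMonic_eq_zero_iff_dvd (MM_monic hr)).2 (dvd_mul_right _ _), add_zero]
  exact (Polynomial.modByMonic_eq_self_iff (MM_monic hr)).2 (by rw [MM_deg hr]; exact hq)

lemma mod_X_pow {r : ℕ} (hr : 0 < r) (w : ℕ) :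
    (X ^ w : Polynomial Z4) %ₘ MM r = X ^ (w % r) := by
  apply modByMonic_eq_of hr
  · have h1 : (X : Polynomial Z4) ^ r - 1 ∣ (X ^ r) ^ (w / r) - 1 := by
      simpa using sub_dvd_pow_sub_pow (X ^ r : Polynomial Z4) 1 (w / r)
    have h2 : (X ^ w : Polynomial Z4) - X ^ (w % r) = X ^ (w % r) * ((X ^ r) ^ (w / r) - 1) := by
      rw [mul_sub, mul_one, ← pow_mul, ← pow_add, Nat.mod_add_div w r]
    rw [h2]
    exact Dvd.dvd.mul_left h1 _
  · rw [Polynomial.degree_X_pow]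
    exact_mod_cast Nat.mod_lt _ hr

lemma vv_X_pow {r : ℕ} (hr : 0 < r) (w : ℕ) (k : Fin r) :
    vv r (X ^ w) k = if w % r = (k : ℕ) then 1 else 0 := by
  rw [vv, mod_X_pow hr, Polynomial.coeff_X_pow]
  exact if_congr eq_comm rfl rfl

lemma vv_C_mul_X_pow {r : ℕ} (hr : 0 < r) (c : Z4) (w : ℕ) (k : Fin r) :
    vv r (C c * X ^ w) k = c * (if w % r = (k : ℕ) then 1 else 0) := by
  rw [vv, ← Polynomial.smul_eq_C_mul, Polynomial.smul_modByMonic, Polynomial.coeff_smul,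
    smul_eq_mul]
  rw [← vv_X_pow hr w k, vv]

lemma vv_sum {r : ℕ} {α : Type*} (t : Finset α) (f : α → Polynomial Z4) (k : Fin r) :
    vv r (∑ i ∈ t, f i) k = ∑ i ∈ t, vv r (f i) k := by
  classical
  induction t using Finset.induction_on with
  | empty => simp [vv, Polynomial.zero_modByMonic]
  | insert _ _ h ih =>
      rw [Finset.sum_insert h, Finset.sum_insert h, ← ih]
      simp [vv, Polynomial.add_modByMonic]

lemma cond_iff {r u w N t : ℕ} (hw : w ≤ N) (ht : t < r) :
    (u + (N - w)) % r = t ↔ (N + (r - t) + u) % r = w % r := by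
  constructor
  · intro h
    have h1 : u + (N - w) ≡ t [MOD r] := by
      unfold Nat.ModEq; rw [h, Nat.mod_eq_of_lt ht]
    have h2 : (u + (N - w)) + (w + (r - t)) ≡ t + (w + (r - t)) [MOD r] := h1.add_right _
    have e1 : (u + (N - w)) + (w + (r - t)) = N + (r - t) + u := by omega
    have e2 : t + (w + (r - t)) = w + r := by omega
    rw [e1, e2] at h2
    calc N + (r - t) + u ≡ w + r [MOD r] := h2
      _ ≡ w [MOD r] := by unfold Nat.ModEq; exact Nat.add_mod_right w r
  · intro h
    have h1 : N + (r - t) + u ≡ w [MOD r] := h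
    have h2 : (N + (r - t) + u) + t ≡ w + t [MOD r] := h1.add_right t
    rw [Nat.add_comm w t] at h2
    have e1 : (N + (r - t) + u) + t = (u + (N - w) + r) + w := by omega
    rw [e1] at h2
    have h3 : u + (N - w) + r ≡ t [MOD r] := Nat.ModEq.add_right_cancel' w h2
    have h4 : u + (N - w) ≡ t [MOD r] := by
      have h5 : u + (N - w) + r ≡ u + (N - w) [MOD r] := by
        unfold Nat.ModEq; exact Nat.add_mod_right _ _
      exact h5.symm.trans h3
    unfold Nat.ModEq at h4
    rw [Nat.mod_eq_of_lt ht] at h4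
    exact h4

lemma key_mono {r : ℕ} (hr : 0 < r) (α β : Z4) (u w N : ℕ) (t : Fin r) (hw : w ≤ N) :
    vv r ((C α * X ^ u) * Polynomial.reflect N (C β * X ^ w)) t
      = ∑ k : Fin r, vv r (X ^ (N + (r - (t : ℕ))) * (C α * X ^ u)) k
          * vv r (C β * X ^ w) k := by
  have ht : (t : ℕ) < r := t.isLt
  have lhs_poly : (C α * X ^ u) * Polynomial.reflect N (C β * X ^ w)
      = C (α * β) * X ^ (u + (N - w)) := by
    rw [Polynomial.reflect_C_mul, Polynomial.reflect_monomial, Polynomial.revAt_le hw,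
      Polynomial.C_mul, pow_add]
    ring
  rw [lhs_poly, vv_C_mul_X_pow hr]
  have rhs : ∀ k : Fin r,
      vv r (X ^ (N + (r - (t:ℕ))) * (C α * X ^ u)) k * vv r (C β * X ^ w) k
      = (α * β) * ((if (N + (r - (t:ℕ)) + u) % r = (k:ℕ) then 1 else 0)
          * (if w % r = (k:ℕ) then 1 else 0)) := by
    intro k
    have e : (X : Polynomial Z4) ^ (N + (r - (t:ℕ))) * (C α * X ^ u)
        = C α * X ^ (N + (r - (t:ℕ)) + u) := by rw [pow_add]; ring
    rw [e, vv_C_mul_X_pow hr, vv_C_mul_X_pow hr]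
    ring
  rw [Finset.sum_congr rfl fun k _ => rhs k, ← Finset.mul_sum]
  congr 1
  have hA : (N + (r - (t:ℕ)) + u) % r < r := Nat.mod_lt _ hr
  have step : ∀ k : Fin r,
      (if (N + (r - (t:ℕ)) + u) % r = (k:ℕ) then (1:Z4) else 0)
        * (if w % r = (k:ℕ) then 1 else 0)
      = if (⟨(N + (r - (t:ℕ)) + u) % r, hA⟩ : Fin r) = k
          then (if w % r = (k:ℕ) then (1:Z4) else 0) else 0 := by
    intro k
    by_cases h : (⟨(N + (r - (t:ℕ)) + u) % r, hA⟩ : Fin r) = k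
    · have : (N + (r - (t:ℕ)) + u) % r = (k:ℕ) := by rw [← h]
      simp [h, this]
    · have hne : ¬ ((N + (r - (t:ℕ)) + u) % r = (k:ℕ)) := fun hc => h (Fin.ext hc)
      simp [h, hne]
  rw [Finset.sum_congr rfl fun k _ => step k, Finset.sum_ite_eq]
  simp only [Finset.mem_univ, if_true]
  exact if_congr ((cond_iff hw ht).trans eq_comm) rfl rfl

end St12
section
open Polynomial Finset St12

namespace St12

lemma reflect_sum {α : Type*} (N : ℕ) (s : Finset α) (f : α → Polynomial Z4) :
    Polynomial.reflect N (∑ i ∈ s, f i) = ∑ i ∈ s, Polynomial.reflect N (f i) := by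
  classical
  induction s using Finset.induction_on with
  | empty => simp
  | insert _ _ h ih => rw [Finset.sum_insert h, Finset.sum_insert h, Polynomial.reflect_add, ih]

lemma sum_swap3 {ι1 ι2 ι3 M : Type*} [AddCommMonoid M] (s1 : Finset ι1) (s2 : Finset ι2)
    (s3 : Finset ι3) (f : ι1 → ι2 → ι3 → M) :
    ∑ a ∈ s1, ∑ b ∈ s2, ∑ c ∈ s3, f a b c = ∑ c ∈ s3, ∑ a ∈ s1, ∑ b ∈ s2, f a b c :=
  calc ∑ a ∈ s1, ∑ b ∈ s2, ∑ c ∈ s3, f a b c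
      = ∑ a ∈ s1, ∑ c ∈ s3, ∑ b ∈ s2, f a b c :=
        Finset.sum_congr rfl fun a _ => Finset.sum_comm
    _ = ∑ c ∈ s3, ∑ a ∈ s1, ∑ b ∈ s2, f a b c := Finset.sum_comm

lemma key_id {r : ℕ} (hr : 0 < r) (a b : Polynomial Z4) {N : ℕ} (hN : b.natDegree ≤ N)
    (t : Fin r) :
    vv r (a * Polynomial.reflect N b) t
      = ∑ k : Fin r, vv r (X ^ (N + (r - (t : ℕ))) * a) k * vv r b k := by
  have ha : a = ∑ u ∈ range (a.natDegree + 1), C (a.coeff u) * X ^ u := by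
    conv_lhs => rw [Polynomial.as_sum_range' a _ (Nat.lt_succ_self _)]
    exact Finset.sum_congr rfl fun u _ => (Polynomial.C_mul_X_pow_eq_monomial).symm
  have hb : b = ∑ w ∈ range (N + 1), C (b.coeff w) * X ^ w := by
    conv_lhs => rw [Polynomial.as_sum_range' b _ (Nat.lt_succ_of_le hN)]
    exact Finset.sum_congr rfl fun u _ => (Polynomial.C_mul_X_pow_eq_monomial).symm
  calc vv r (a * Polynomial.reflect N b) t
      = ∑ u ∈ range (a.natDegree + 1), ∑ w ∈ range (N + 1),
          vv r ((C (a.coeff u) * X ^ u) * Polynomial.reflect N (C (b.coeff w) * X ^ w)) t := by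
        conv_lhs => rw [ha, hb]
        rw [reflect_sum, Finset.sum_mul_sum, vv_sum]
        exact Finset.sum_congr rfl fun u _ => vv_sum _ _ _
    _ = ∑ u ∈ range (a.natDegree + 1), ∑ w ∈ range (N + 1),
          ∑ k : Fin r, vv r (X ^ (N + (r - (t:ℕ))) * (C (a.coeff u) * X ^ u)) k
            * vv r (C (b.coeff w) * X ^ w) k := by
        refine Finset.sum_congr rfl fun u _ => Finset.sum_congr rfl fun w hw => ?_
        exact key_mono hr _ _ u w N t (Nat.lt_succ_iff.mp (Finset.mem_range.mp hw))
    _ = ∑ k : Fin r, vv r (X ^ (N + (r - (t:ℕ))) * a) k * vv r b k := by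
        have expand : ∑ k : Fin r, vv r (X ^ (N + (r - (t:ℕ))) * a) k * vv r b k
            = ∑ k : Fin r, ∑ u ∈ range (a.natDegree + 1), ∑ w ∈ range (N + 1),
                vv r (X ^ (N + (r - (t:ℕ))) * (C (a.coeff u) * X ^ u)) k
                  * vv r (C (b.coeff w) * X ^ w) k := by
          refine Finset.sum_congr rfl fun k _ => ?_
          conv_lhs => rw [ha, hb]
          rw [Finset.mul_sum, vv_sum, vv_sum, Finset.sum_mul_sum]
        rw [expand]
        exact sum_swap3 _ _ _ _

lemma key {r : ℕ} (hr : 0 < r) (a b : Polynomial Z4)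
    (h : ∀ i : ℕ, ∑ k : Fin r, vv r (X ^ i * a) k * vv r b k = 0) :
    (X ^ r - 1 : Polynomial Z4) ∣ a * b.reverse := by
  have hmod : (a * b.reverse) %ₘ MM r = 0 := by
    apply Polynomial.ext
    intro n
    rw [Polynomial.coeff_zero]
    by_cases hn : n < r
    · have : ((a * b.reverse) %ₘ MM r).coeff n = vv r (a * Polynomial.reflect b.natDegree b) ⟨n, hn⟩ := rfl
      rw [this, key_id hr a b le_rfl ⟨n, hn⟩]
      exact h _
    · refine Polynomial.coeff_eq_zero_of_degree_lt ?_
      calc ((a * b.reverse) %ₘ MM r).degree < (MM r).degree :=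
            Polynomial.degree_modByMonic_lt _ (MM_monic hr)
        _ = (r : WithBot ℕ) := MM_deg hr
        _ ≤ (n : WithBot ℕ) := by exact_mod_cast Nat.le_of_not_lt hn
  exact (Polynomial.modByMonic_eq_zero_iff_dvd (MM_monic hr)).1 hmod

lemma toPoly_vv {r : ℕ} (hr : 0 < r) (p : Polynomial Z4) :
    toPoly (vv r p) = p %ₘ MM r := by
  unfold toPoly vv
  rw [Polynomial.sum_fin (fun n a => C a * X ^ n) (by simp)
    (lt_of_lt_of_le (Polynomial.degree_modByMonic_lt p (MM_monic hr)) (by rw [MM_deg hr]))]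
  exact Polynomial.sum_C_mul_X_pow_eq _

lemma mkQ_vv {r : ℕ} (hr : 0 < r) (p : Polynomial Z4) :
    mkQ r (toPoly (vv r p)) = mkQ r p := by
  rw [toPoly_vv hr]
  unfold mkQ
  rw [Ideal.Quotient.eq, Polynomial.modByMonic_eq_sub_mul_div p (MM r)]
  refine Ideal.mem_span_singleton.mpr ?_
  have : p - (MM r) * (p /ₘ MM r) - p = -((MM r) * (p /ₘ MM r)) := by ring
  rw [this]
  exact (dvd_mul_right _ _).neg_right

lemma smul_mkQ (n : ℕ) (a p : Polynomial Z4) : a • mkQ n p = mkQ n (a * p) := rfl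

end St12
end

open St12 in
/-- if `C = ((F1|0),(l|F2))` is a double cyclic code with dual
`C⊥ = ((F̂1|0),(l̂|F̂2))`, and `d = gcd(F1,l)` (a common divisor which is a
`Z4[x]`-combination of `F1` and `l`), then `F̂1*·gcd(F1,l)` is a multiple of `x^r−1`. -/
theorem stmt_12 (r s : ℕ) (hr : Odd r) (hs : Odd s)
    (F1 l F2 Fh1 lh Fh2 d : Polynomial Z4)
    (C : Set ((Fin r → Z4) × (Fin s → Z4)))
    (hC : ∀ c, c ∈ C ↔ tau c ∈ polyGen2 r s F1 l F2)
    (hdual : ∀ c, c ∈ dualSet C ↔ tau c ∈ polyGen2 r s Fh1 lh Fh2)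
    (hd1 : d ∣ F1) (hd2 : d ∣ l)
    (hbezout : ∃ a b : Polynomial Z4, d = a * F1 + b * l) :
    ∃ lam : Polynomial Z4, Fh1.reverse * d = lam * (X ^ r - 1) := by
  have hr0 : 0 < r := hr.pos
  have hs0 : 0 < s := hs.pos
  -- the dual codeword corresponding to (Fh1 | 0)
  set c' : (Fin r → Z4) × (Fin s → Z4) := (vv r Fh1, fun _ => 0) with hc'def
  have hc'mem : c' ∈ dualSet C := by
    rw [hdual]
    have htc : tau c' = (mkQ r Fh1, 0) := by
      unfold tau
      refine Prod.ext ?_ ?_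
      · exact mkQ_vv hr0 Fh1
      · show mkQ s (toPoly (fun _ => (0 : Z4))) = 0
        unfold toPoly
        simp [mkQ]
    rw [htc]
    exact Submodule.subset_span (Set.mem_insert _ _)
  -- orthogonality of generators of C to (Fh1 | 0), shifted
  have horth : ∀ g g2 : Polynomial Z4,
      ((mkQ r g, mkQ s g2) : Rq r × Rq s) ∈ polyGen2 r s F1 l F2 →
      ∀ i : ℕ, ∑ k : Fin r, vv r (X ^ i * g) k * vv r Fh1 k = 0 := by
    intro g g2 hg i
    have hcw : ((vv r (X ^ i * g), vv s (X ^ i * g2)) :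
        (Fin r → Z4) × (Fin s → Z4)) ∈ C := by
      rw [hC]
      have htau : tau ((vv r (X ^ i * g), vv s (X ^ i * g2)) :
          (Fin r → Z4) × (Fin s → Z4))
          = (X ^ i : Polynomial Z4) • ((mkQ r g, mkQ s g2) : Rq r × Rq s) := by
        unfold tau
        rw [Prod.smul_mk, smul_mkQ, smul_mkQ]
        exact Prod.ext (mkQ_vv hr0 _) (mkQ_vv hs0 _)
      rw [htau]
      exact Submodule.smul_mem _ _ hg
    have h0 := hc'mem _ hcw
    simpa [innerProd, hc'def] using h0
  have h1 : ∀ i : ℕ, ∑ k : Fin r, vv r (X ^ i * F1) k * vv r Fh1 k = 0 := by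
    refine horth F1 0 ?_
    have : ((mkQ r F1, mkQ s 0) : Rq r × Rq s) = (mkQ r F1, 0) := by
      unfold mkQ; simp
    rw [this]
    exact Submodule.subset_span (Set.mem_insert _ _)
  have h2 : ∀ i : ℕ, ∑ k : Fin r, vv r (X ^ i * l) k * vv r Fh1 k = 0 :=
    horth l F2 (Submodule.subset_span (Set.mem_insert_of_mem _ rfl))
  have k1 : (X ^ r - 1 : Polynomial Z4) ∣ F1 * Fh1.reverse := key hr0 F1 Fh1 h1
  have k2 : (X ^ r - 1 : Polynomial Z4) ∣ l * Fh1.reverse := key hr0 l Fh1 h2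
  obtain ⟨a, b, hab⟩ := hbezout
  have hdvd : (X ^ r - 1 : Polynomial Z4) ∣ Fh1.reverse * d := by
    have : Fh1.reverse * d = a * (F1 * Fh1.reverse) + b * (l * Fh1.reverse) := by
      rw [hab]; ring
    rw [this]
    exact dvd_add (k1.mul_left a) (k2.mul_left b)
  obtain ⟨lam, hlam⟩ := hdvd
  exact ⟨lam, by rw [hlam, mul_comm]⟩
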